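/- Graph distance lower bound for detours: if source (x_s, y) and destination (x_d, y) lie in the same row with x_d < a ≤ b < x_s and the obstacle R = [a,b]×[c,d] satisfies c ≤ y ≤ d, then every path of active vertices from source to destination has length at least |x_s - x_d| + 2·min(y - (c-1), (d+1) - y). -/

import Mathlib

/-- An axis-aligned rectangle `[a,b] × [c,d]` of grid cells. -/
structure Rect where
  a : ℤ
  b : ℤ
  c : ℤ
  d : ℤ
  hab : a ≤ b
  hcd : c ≤ d

/-- The set of cells covered by a rectangle. -/
def Rect.Mem (R : Rect) (p : ℤ × ℤ) : Prop :=
  R.a ≤ p.1 ∧ p.1 ≤ R.b ∧ R.c ≤ p.2 ∧ p.2 ≤ R.d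

/-- Grid adjacency. -/
def adj (u v : ℤ × ℤ) : Prop := (u.1 - v.1).natAbs + (u.2 - v.2).natAbs = 1

/-- Graph-distance lower bound for detours: if source `(x_s, y)` and
destination `(x_d, y)` lie in the same row, on opposite sides of the obstacle
`R = [a,b]×[c,d]` with `c ≤ y ≤ d`, then every path of active vertices
(vertices outside `R`) from source to destination has at least
`|x_s - x_d| + 2·min(y-(c-1), (d+1)-y)` edges. -/
theorem manhattan_le (l : List (ℤ × ℤ)) (v : ℤ × ℤ) :
    ∀ u : ℤ × ℤ, l.Chain' adj → l.head? = some u → l.getLast? = some v →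
    (u.1 - v.1).natAbs + (u.2 - v.2).natAbs + 1 ≤ l.length := by
  induction l with
  | nil => intro u _ hh _; simp at hh
  | cons a t ih =>
    intro u hc hh hl
    obtain rfl : a = u := by simpa using hh
    cases t with
    | nil =>
      obtain rfl : a = v := by simpa using hl
      simp
    | cons w t' =>
      have hadj : adj a w := (List.isChain_cons_cons.mp hc).1
      have := ih w (List.isChain_cons_cons.mp hc).2 rfl (by simpa using hl)
      unfold adj at hadj
      simp only [List.length_cons] at *
      omega

theorem crosses (l : List (ℤ × ℤ)) (v : ℤ × ℤ) (t : ℤ) (h1 : v.1 ≤ t) :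
    ∀ u : ℤ × ℤ, l.Chain' adj → l.head? = some u → l.getLast? = some v →
    t ≤ u.1 → ∃ p ∈ l, p.1 = t := by
  induction l with
  | nil => intro u _ hh _ _; simp at hh
  | cons a s ih =>
    intro u hc hh hl h2
    obtain rfl : a = u := by simpa using hh
    by_cases ht : a.1 = t
    · exact ⟨a, List.mem_cons_self .., ht⟩
    cases s with
    | nil =>
      obtain rfl : a = v := by simpa using hl
      omega
    | cons w s' =>
      have hadj : adj a w := (List.isChain_cons_cons.mp hc).1
      unfold adj at hadj
      obtain ⟨p, hp, hpt⟩ := ih w (List.isChain_cons_cons.mp hc).2 rfl (by simpa using hl) (by omega)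
      exact ⟨p, List.mem_cons_of_mem _ hp, hpt⟩

theorem detour_lower_bound (R : Rect) (xs xd y : ℤ)
    (hx : xd < R.a ∧ R.b < xs) (hy : R.c ≤ y ∧ y ≤ R.d)
    (l : List (ℤ × ℤ))
    (hhead : l.head? = some (xs, y)) (hlast : l.getLast? = some (xd, y))
    (hchain : l.Chain' adj)
    (hactive : ∀ p ∈ l, ¬ R.Mem p) :
    (xs - xd).natAbs + 2 * min (y - (R.c - 1)).toNat ((R.d + 1) - y).toNat + 1
      ≤ l.length := by
  obtain ⟨p, hpl, hpa⟩ := crosses l (xd, y) R.a (le_of_lt hx.1) (xs, y) hchain hhead hlast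
    (le_trans R.hab (le_of_lt hx.2))
  obtain ⟨l1, l2, rfl⟩ := List.append_of_mem hpl
  have heq : l1 ++ p :: l2 = (l1 ++ [p]) ++ l2 := by simp
  have hc1 : (l1 ++ [p]).Chain' adj := by
    rw [heq] at hchain; exact (List.isChain_append.mp hchain).1
  have hc2 : (p :: l2).Chain' adj := by
    rw [heq] at hchain
    rcases (List.isChain_append.mp hchain) with ⟨_, h2, h3⟩
    cases l2 with
    | nil => exact List.isChain_singleton p
    | cons w l2' =>
      refine List.isChain_cons_cons.mpr ⟨?_, h2⟩
      exact h3 p (by simp) w (by simp)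
  have hh1 : (l1 ++ [p]).head? = some (xs, y) := by
    cases l1 with
    | nil => simpa using hhead
    | cons a t => simpa using hhead
  have hl2 : (p :: l2).getLast? = some (xd, y) := by
    rw [List.getLast?_append_of_ne_nil] at hlast
    · exact hlast
    · simp
  have m1 := manhattan_le (l1 ++ [p]) p (xs, y) hc1 hh1 (by simp)
  have m2 := manhattan_le (p :: l2) (xd, y) p hc2 rfl hl2
  have hmem := hactive p hpl
  unfold Rect.Mem at hmem
  push_neg at hmem
  have hside : p.2 ≤ R.c - 1 ∨ R.d + 1 ≤ p.2 := by
    rcases le_or_gt R.c p.2 with h | h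
    · have := hmem (le_of_eq hpa.symm) (hpa ▸ R.hab) h
      omega
    · omega
  have hab := R.hab
  have hcd := R.hcd
  have hx1 := hx.1
  have hx2 := hx.2
  have hy1 := hy.1
  have hy2 := hy.2
  rw [hpa] at m1 m2
  simp only [List.length_append, List.length_cons, List.length_nil,
    List.length_singleton] at m1 m2 ⊢
  omega
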